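/- Let F : ({0,1}^l)^N → ({0,1}^l)^N be the map sending an initial state s(0) of the generalized counter with parameters N and l to the state s(N) obtained after N time steps (starting at time 0, so mode(0) = switch). Then F has a periodic orbit of length at least 2^{Nl}; in particular the 2^{Nl} states F^k(0,...,0) for k = 0, 1, ..., 2^{Nl} − 1 are pairwise distinct. -/

import Mathlib

/-- The two modes of the counter. -/
inductive Mode : Type
  | rotate : Mode
  | switch : Mode
deriving DecidableEq

/-- `β(x) = x^1·2^0 + x^2·2^1 + ⋯ + x^l·2^(l-1)` (0-indexed: bit `j` has weight `2^j`). -/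
def beta {l : ℕ} (x : Fin l → Bool) : ℕ :=
  ∑ j : Fin l, (x j).toNat * 2 ^ (j : ℕ)

/-- Binary increment modulo `2^l`: the unique `y : {0,1}^l` with
`β(y) = β(x) + 1 mod 2^l`. -/
def binInc {l : ℕ} (x : Fin l → Bool) : Fin l → Bool :=
  fun j => ((beta x + 1) % 2 ^ l).testBit (j : ℕ)

/-- A trajectory `s` (with mode sequence `mode`) of the generalized counter
with parameters `N` and `l`, started at time `0` (so `mode 0 = switch`).
Coordinates are `0`-indexed: coordinate `i` corresponds to `s_{i+1}`. -/
def GenCounterTraj {N l : ℕ} (hN : 0 < N)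
    (s : ℕ → Fin N → Fin l → Bool) (mode : ℕ → Mode) : Prop :=
  (∀ (t : ℕ) (i : Fin N) (h : (i : ℕ) + 1 < N),
      s (t + 1) i = s t ⟨(i : ℕ) + 1, h⟩) ∧
  (∀ t : ℕ, s (t + 1) ⟨N - 1, Nat.sub_lt hN one_pos⟩ =
      (if mode t = Mode.switch then binInc (s t ⟨0, hN⟩) else s t ⟨0, hN⟩)) ∧
  (∀ t : ℕ, N ∣ t → mode t = Mode.switch) ∧
  (∀ t : ℕ, ¬ N ∣ (t + 1) →
      mode (t + 1) =
        (if s t ⟨0, hN⟩ = (fun _ => true) then mode t else Mode.rotate))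

/-! ### Bit-level lemmas about `beta` and `binInc` -/

lemma beta_succ {l : ℕ} (x : Fin (l+1) → Bool) :
    beta x = (x 0).toNat + 2 * beta (fun j => x j.succ) := by
  rw [beta, Fin.sum_univ_succ, beta, Finset.mul_sum]
  simp [pow_succ, mul_comm, mul_left_comm, mul_assoc]

lemma beta_lt {l : ℕ} (x : Fin l → Bool) : beta x < 2 ^ l := by
  induction l with
  | zero => simp [beta]
  | succ l ih =>
    have h := ih (fun j => x j.succ)
    have : (x 0).toNat ≤ 1 := Bool.toNat_le _
    rw [beta_succ]
    have : 2 ^ (l+1) = 2 * 2 ^ l := by ring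
    omega

lemma beta_testBit_of_lt {l n : ℕ} (hn : n < 2 ^ l) :
    beta (fun j : Fin l => n.testBit (j : ℕ)) = n := by
  induction l generalizing n with
  | zero => simp at hn; simp [beta, hn]
  | succ l ih =>
    rw [beta_succ]
    have h2 : n / 2 < 2 ^ l := by
      have : 2 ^ (l+1) = 2 * 2 ^ l := by ring
      omega
    have := ih h2
    simp only [Fin.val_succ, Nat.testBit_succ] at *
    rw [this]
    have h0 : (n.testBit 0).toNat = n % 2 := by
      rw [Nat.testBit_zero]
      rcases Nat.mod_two_eq_zero_or_one n with h | h <;> simp [h]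
    simp only [Fin.val_zero] at *
    omega

lemma testBit_beta {l : ℕ} (x : Fin l → Bool) (j : Fin l) :
    (beta x).testBit (j : ℕ) = x j := by
  induction l with
  | zero => exact j.elim0
  | succ l ih =>
    rw [beta_succ]
    rcases j with ⟨jv, hj⟩
    match jv with
    | 0 =>
      simp only [Fin.val_mk, Nat.testBit_zero]
      have h1 : (x 0).toNat ≤ 1 := Bool.toNat_le _
      have : ((x 0).toNat + 2 * beta fun j => x j.succ) % 2 = (x 0).toNat := by
        rw [Nat.add_mul_mod_self_left, Nat.mod_eq_of_lt (by omega)]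
      rw [this]
      cases h : x 0 <;> simp [h]
    | jv + 1 =>
      have hj' : jv < l := by omega
      simp only [Fin.val_mk, Nat.testBit_succ]
      have h1 : (x 0).toNat ≤ 1 := Bool.toNat_le _
      have : ((x 0).toNat + 2 * beta fun j => x j.succ) / 2 = beta (fun j => x j.succ) := by
        rw [Nat.add_mul_div_left _ _ (by norm_num : (0:ℕ) < 2), Nat.div_eq_of_lt (by omega)]
        omega
      rw [this]
      have := ih (fun j => x j.succ) ⟨jv, hj'⟩
      simpa using this

lemma beta_injective {l : ℕ} {x y : Fin l → Bool} (h : beta x = beta y) : x = y := by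
  funext j
  rw [← testBit_beta x j, ← testBit_beta y j, h]

lemma beta_binInc {l : ℕ} (x : Fin l → Bool) :
    beta (binInc x) = (beta x + 1) % 2 ^ l :=
  beta_testBit_of_lt (Nat.mod_lt _ (by positivity))

lemma beta_ones {l : ℕ} : beta (fun _ : Fin l => true) = 2 ^ l - 1 := by
  have h : (fun _ : Fin l => true) = fun j : Fin l => (2 ^ l - 1).testBit (j : ℕ) := by
    funext j
    rw [Nat.testBit_two_pow_sub_one]
    simp [j.isLt]
  rw [h]
  have h0 : 0 < 2 ^ l := by positivity
  exact beta_testBit_of_lt (by omega)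

lemma ones_iff {l : ℕ} (x : Fin l → Bool) :
    x = (fun _ => true) ↔ beta x = 2 ^ l - 1 := by
  constructor
  · rintro rfl; exact beta_ones
  · intro h; exact beta_injective (by rw [h, beta_ones])

/-! ### Digit-level lemmas: base-`B` representation -/

def eN {N : ℕ} (B : ℕ) (d : Fin N → ℕ) : ℕ := ∑ i : Fin N, d i * B ^ (i : ℕ)

lemma eN_succ {N B : ℕ} (d : Fin (N+1) → ℕ) :
    eN B d = d 0 + B * eN B (fun i => d i.succ) := by
  rw [eN, Fin.sum_univ_succ, eN, Finset.mul_sum]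
  simp [pow_succ, mul_comm, mul_left_comm, mul_assoc]

lemma eN_lt {N B : ℕ} (hB : 0 < B) (d : Fin N → ℕ) (hd : ∀ i, d i < B) :
    eN B d < B ^ N := by
  induction N with
  | zero => simp [eN]
  | succ N ih =>
    rw [eN_succ]
    have h1 := ih (fun i => d i.succ) (fun i => hd i.succ)
    have h0 := hd 0
    calc d 0 + B * eN B (fun i => d i.succ) < B + B * eN B (fun i => d i.succ) := by omega
    _ = B * (eN B (fun i => d i.succ) + 1) := by ring
    _ ≤ B * B ^ N := by exact Nat.mul_le_mul_left B (by omega)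
    _ = B ^ (N+1) := by ring

lemma eN_digit {N B : ℕ} (hB : 0 < B) (d : Fin N → ℕ) (hd : ∀ i, d i < B) (i : Fin N) :
    eN B d / B ^ (i : ℕ) % B = d i := by
  induction N with
  | zero => exact i.elim0
  | succ N ih =>
    rw [eN_succ]
    rcases i with ⟨iv, hi⟩
    match iv with
    | 0 =>
      simp only [Fin.val_mk, pow_zero, Nat.div_one]
      rw [Nat.add_mul_mod_self_left, Nat.mod_eq_of_lt (hd _)]
      rfl
    | iv + 1 =>
      have hi' : iv < N := by omega
      have hdiv : (d 0 + B * eN B (fun i => d i.succ)) / B ^ (iv + 1)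
          = eN B (fun i => d i.succ) / B ^ iv := by
        rw [pow_succ', ← Nat.div_div_eq_div_mul]
        congr 1
        rw [Nat.add_mul_div_left _ _ hB, Nat.div_eq_of_lt (hd 0)]
        omega
      simp only [Fin.val_mk]
      rw [hdiv]
      have := ih (fun i => d i.succ) (fun i => hd i.succ) ⟨iv, hi'⟩
      simpa using this

lemma eN_inc {N B : ℕ} (hB : 0 < B) (d : Fin N → ℕ) (hd : ∀ i, d i < B) :
    eN B (fun i => if ∀ j : Fin N, (j : ℕ) < (i : ℕ) → d j = B - 1 then (d i + 1) % B else d i)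
      = (eN B d + 1) % B ^ N := by
  induction N with
  | zero => simp [eN]
  | succ N ih =>
    rw [eN_succ, eN_succ d]
    have hcond0 : (∀ j : Fin (N+1), (j : ℕ) < ((0 : Fin (N+1)) : ℕ) → d j = B - 1) := by
      intro j hj; simp at hj
    rw [if_pos hcond0]
    by_cases h0 : d 0 = B - 1
    · have hsucc : ∀ i : Fin N,
          (fun i' : Fin (N+1) => if ∀ j : Fin (N+1), (j : ℕ) < (i' : ℕ) → d j = B - 1
            then (d i' + 1) % B else d i') i.succ
          = (if ∀ j : Fin N, (j : ℕ) < (i : ℕ) → (fun k : Fin N => d k.succ) j = B - 1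
            then ((fun k : Fin N => d k.succ) i + 1) % B else (fun k : Fin N => d k.succ) i) := by
        intro i
        simp only
        congr 1
        · simp only [eq_iff_iff]
          constructor
          · intro h j hj
            exact h j.succ (by simpa using hj)
          · intro h j hj
            rcases j with ⟨jv, hjv⟩
            match jv with
            | 0 => exact h0
            | jv + 1 =>
              have : jv < N := by omega
              have := h ⟨jv, this⟩ (by simp at hj ⊢; omega)
              simpa using this
      have : (fun i : Fin N =>
          (fun i' : Fin (N+1) => if ∀ j : Fin (N+1), (j : ℕ) < (i' : ℕ) → d j = B - 1
            then (d i' + 1) % B else d i') i.succ)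
          = (fun i : Fin N => if ∀ j : Fin N, (j : ℕ) < (i : ℕ) → (fun k : Fin N => d k.succ) j = B - 1
            then ((fun k : Fin N => d k.succ) i + 1) % B else (fun k : Fin N => d k.succ) i) := by
        funext i; exact hsucc i
      rw [this, ih (fun k => d k.succ) (fun k => hd k.succ)]
      have hd0 : (d 0 + 1) % B = 0 := by
        rw [h0]
        have : B - 1 + 1 = B := by omega
        rw [this, Nat.mod_self]
      rw [hd0, h0]
      have hrhs : B - 1 + B * eN B (fun k => d k.succ) + 1 = B * (eN B (fun k => d k.succ) + 1) := by
        have : B * (eN B (fun k => d k.succ) + 1) = B * eN B (fun k => d k.succ) + B := by ring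
        omega
      rw [hrhs]
      have : B ^ (N + 1) = B * B ^ N := by ring
      rw [this, Nat.mul_mod_mul_left]
      omega
    · have hd0 : (d 0 + 1) % B = d 0 + 1 := Nat.mod_eq_of_lt (by have := hd 0; omega)
      have hsucc : ∀ i : Fin N,
          (fun i' : Fin (N+1) => if ∀ j : Fin (N+1), (j : ℕ) < (i' : ℕ) → d j = B - 1
            then (d i' + 1) % B else d i') i.succ = d i.succ := by
        intro i
        simp only
        rw [if_neg]
        intro h
        exact h0 (h 0 (by simp))
      have heq : (fun i : Fin N =>
          (fun i' : Fin (N+1) => if ∀ j : Fin (N+1), (j : ℕ) < (i' : ℕ) → d j = B - 1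
            then (d i' + 1) % B else d i') i.succ) = fun i : Fin N => d i.succ := by
        funext i; exact hsucc i
      rw [heq, hd0]
      have hlt : eN B (fun i : Fin N => d i.succ) < B ^ N := eN_lt hB _ (fun i => hd i.succ)
      have hlt2 : d 0 + B * eN B (fun i : Fin N => d i.succ) + 1 < B ^ (N+1) := by
        have h1 : d 0 + 1 < B := by have := hd 0; omega
        have h3 : B * (eN B (fun i : Fin N => d i.succ) + 1) = B * eN B (fun i : Fin N => d i.succ) + B := by ring
        have h2 : B * (eN B (fun i : Fin N => d i.succ) + 1) ≤ B * B ^ N :=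
          Nat.mul_le_mul_left B (by omega)
        have h4 : B ^ (N+1) = B * B ^ N := by ring
        omega
      rw [Nat.mod_eq_of_lt hlt2]
      omega

/-! ### The trajectory of the counter and the `N`-step map -/

/-- One application of the counter over `N` steps. -/
def stepF {N l : ℕ} (x : Fin N → Fin l → Bool) : Fin N → Fin l → Bool :=
  fun i => if ∀ j : Fin N, (j : ℕ) < (i : ℕ) → x j = (fun _ => true)
    then binInc (x i) else x i

/-- The trajectory of the counter started at `x`. -/
def traj {N l : ℕ} (hN : 0 < N) (x : Fin N → Fin l → Bool) :
    ℕ → (Fin N → Fin l → Bool) × Mode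
  | 0 => (x, Mode.switch)
  | (t+1) =>
    let p := traj hN x t
    (fun i => if h : (i : ℕ) + 1 < N then p.1 ⟨(i : ℕ) + 1, h⟩
        else (if p.2 = Mode.switch then binInc (p.1 ⟨0, hN⟩) else p.1 ⟨0, hN⟩),
     if N ∣ (t+1) then Mode.switch
        else (if p.1 ⟨0, hN⟩ = (fun _ => true) then p.2 else Mode.rotate))

lemma traj_isTraj {N l : ℕ} (hN : 0 < N) (x : Fin N → Fin l → Bool) :
    GenCounterTraj hN (fun t => (traj hN x t).1) (fun t => (traj hN x t).2) := by
  refine ⟨?_, ?_, ?_, ?_⟩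
  · intro t i h
    simp only [traj]
    rw [dif_pos h]
  · intro t
    simp only [traj]
    rw [dif_neg (by omega)]
  · intro t ht
    match t with
    | 0 => rfl
    | t+1 =>
      simp only [traj]
      rw [if_pos ht]
  · intro t ht
    simp only [traj]
    rw [if_neg ht]

lemma traj_early {N l : ℕ} (hN : 0 < N) (x : Fin N → Fin l → Bool) :
    ∀ (t k : ℕ) (h : k + t < N),
      (traj hN x t).1 ⟨k, by omega⟩ = x ⟨k + t, h⟩ := by
  intro t
  induction t with
  | zero => intro k h; rfl
  | succ t ih =>
    intro k h
    simp only [traj]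
    rw [dif_pos (by omega : k + 1 < N)]
    have := ih (k+1) (by omega)
    rw [this]
    exact congrArg x (Fin.ext (show k + 1 + t = k + (t + 1) by omega))

lemma traj_shift {N l : ℕ} (hN : 0 < N) (x : Fin N → Fin l → Bool) :
    ∀ (d t k : ℕ) (h : k + d < N),
      (traj hN x (t + d)).1 ⟨k, by omega⟩ = (traj hN x t).1 ⟨k + d, h⟩ := by
  intro d
  induction d with
  | zero => intro t k h; rfl
  | succ d ih =>
    intro t k h
    have h1 : t + (d + 1) = (t + d) + 1 := by omega
    rw [h1]
    simp only [traj]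
    rw [dif_pos (by omega : k + 1 < N)]
    have := ih t (k+1) (by omega)
    rw [this]
    exact congrArg _ (Fin.ext (show k + 1 + d = k + (d + 1) by omega))

lemma traj_mode {N l : ℕ} (hN : 0 < N) (x : Fin N → Fin l → Bool) :
    ∀ t : ℕ, t < N →
      ((traj hN x t).2 = Mode.switch ↔
        ∀ j : Fin N, (j : ℕ) < t → x j = (fun _ => true)) := by
  intro t
  induction t with
  | zero =>
    intro _
    constructor
    · intro _ j hj; exact absurd hj (by omega)
    · intro _; rfl
  | succ t ih =>
    intro ht
    have hnd : ¬ N ∣ (t + 1) := by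
      intro hd
      have := Nat.le_of_dvd (by omega) hd
      omega
    simp only [traj]
    rw [if_neg hnd]
    have h0 : (traj hN x t).1 ⟨0, hN⟩ = x ⟨t, by omega⟩ := by
      have := traj_early hN x t 0 (by omega)
      simpa using this
    rw [h0]
    by_cases hx : x ⟨t, by omega⟩ = (fun _ => true)
    · rw [if_pos hx]
      rw [ih (by omega)]
      constructor
      · intro hall j hj
        rcases Nat.lt_or_ge (j : ℕ) t with h' | h'
        · exact hall j h'
        · have : (j : ℕ) = t := by omega
          have hje : j = ⟨t, by omega⟩ := Fin.ext this
          rw [hje]; exact hx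
      · intro hall j hj
        exact hall j (by omega)
    · rw [if_neg hx]
      constructor
      · intro h; exact absurd h (by simp)
      · intro hall
        exact absurd (hall ⟨t, by omega⟩ (by simp)) hx

lemma traj_N {N l : ℕ} (hN : 0 < N) (x : Fin N → Fin l → Bool) (i : Fin N) :
    (traj hN x N).1 i = stepF x i := by
  rcases i with ⟨k, hk⟩
  obtain ⟨d, rfl⟩ : ∃ d, N = k + 1 + d := ⟨N - 1 - k, by omega⟩
  have h1 := traj_shift hN x d (k+1) k (by omega)
  rw [h1]
  have h2 : (⟨k + d, by omega⟩ : Fin (k+1+d)) = ⟨(k+1+d) - 1, by omega⟩ :=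
    Fin.ext (show k + d = (k+1+d) - 1 by omega)
  rw [h2]
  simp only [traj]
  rw [dif_neg (by omega)]
  have h0 : (traj hN x k).1 ⟨0, hN⟩ = x ⟨k, hk⟩ := by
    have := traj_early hN x k 0 (by omega)
    simpa using this
  rw [h0]
  rw [stepF]
  by_cases hc : ∀ j : Fin (k+1+d), (j : ℕ) < k → x j = (fun _ => true)
  · rw [if_pos hc, if_pos ((traj_mode hN x k hk).2 hc)]
  · rw [if_neg hc, if_neg (fun h => hc ((traj_mode hN x k hk).1 h))]

/-! ### The encoding and the increment property of `stepF` -/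

def Enc {N l : ℕ} (x : Fin N → Fin l → Bool) : ℕ :=
  eN (2 ^ l) (fun i => beta (x i))

lemma pow_pow_eq {N l : ℕ} : (2 ^ l) ^ N = 2 ^ (N * l) := by
  rw [← pow_mul, mul_comm]

lemma Enc_lt {N l : ℕ} (x : Fin N → Fin l → Bool) : Enc x < 2 ^ (N * l) := by
  rw [← pow_pow_eq]
  exact eN_lt (by positivity) _ (fun i => beta_lt _)

lemma Enc_injective {N l : ℕ} {x y : Fin N → Fin l → Bool} (h : Enc x = Enc y) : x = y := by
  funext i
  apply beta_injective
  have hx := eN_digit (B := 2 ^ l) (by positivity) (fun i => beta (x i)) (fun i => beta_lt _) i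
  have hy := eN_digit (B := 2 ^ l) (by positivity) (fun i => beta (y i)) (fun i => beta_lt _) i
  rw [← hx, ← hy]
  unfold Enc at h
  rw [h]

lemma Enc_stepF {N l : ℕ} (x : Fin N → Fin l → Bool) :
    Enc (stepF x) = (Enc x + 1) % 2 ^ (N * l) := by
  have hdig : (fun i => beta (stepF x i)) =
      (fun i : Fin N => if ∀ j : Fin N, (j : ℕ) < (i : ℕ) → beta (x j) = 2 ^ l - 1
        then (beta (x i) + 1) % 2 ^ l else beta (x i)) := by
    funext i
    rw [stepF]
    by_cases hc : ∀ j : Fin N, (j : ℕ) < (i : ℕ) → x j = (fun _ => true)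
    · rw [if_pos hc, if_pos (fun j hj => (ones_iff (x j)).1 (hc j hj)), beta_binInc]
    · rw [if_neg hc, if_neg (fun h => hc (fun j hj => (ones_iff (x j)).2 (h j hj)))]
  rw [Enc, hdig, eN_inc (by positivity) _ (fun i => beta_lt _), pow_pow_eq]
  rfl

/-! ### Main theorem -/

/-- If `F` maps each initial state `s(0)` of the generalized counter with
parameters `N` and `l` to the state `s(N)` obtained after `N` steps, then `F`
has a periodic orbit of length at least `2^(N·l)`; in particular the states
`F^[k] (0,…,0)` for `k = 0, …, 2^(N·l) - 1` are pairwise distinct. -/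
theorem stmt4 (N l : ℕ) (hN : 0 < N)
    (F : (Fin N → Fin l → Bool) → (Fin N → Fin l → Bool))
    (hF : ∀ (s : ℕ → Fin N → Fin l → Bool) (mode : ℕ → Mode),
      GenCounterTraj hN s mode → F (s 0) = s N) :
    (∃ (x : Fin N → Fin l → Bool) (p : ℕ),
      2 ^ (N * l) ≤ p ∧ F^[p] x = x ∧ ∀ k : ℕ, 0 < k → k < p → F^[k] x ≠ x) ∧
    (∀ k₁ k₂ : ℕ, k₁ < 2 ^ (N * l) → k₂ < 2 ^ (N * l) →
      F^[k₁] (fun _ _ => false) = F^[k₂] (fun _ _ => false) → k₁ = k₂) := by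
  have hFstep : ∀ x : Fin N → Fin l → Bool, F x = stepF x := by
    intro x
    have h : F x = (traj hN x N).1 :=
      hF (fun t => (traj hN x t).1) (fun t => (traj hN x t).2) (traj_isTraj hN x)
    rw [h]
    funext i
    exact traj_N hN x i
  set M := 2 ^ (N * l) with hM
  have hMpos : 0 < M := by positivity
  have hiter : ∀ (k : ℕ) (x : Fin N → Fin l → Bool), Enc (F^[k] x) = (Enc x + k) % M := by
    intro k
    induction k with
    | zero =>
      intro x
      simp [Nat.mod_eq_of_lt (Enc_lt x)]
      exact (Nat.mod_eq_of_lt (Enc_lt x)).symm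
    | succ k ih =>
      intro x
      rw [Function.iterate_succ_apply', hFstep, Enc_stepF, ih x, ← hM, Nat.mod_add_mod]
      rw [← Nat.add_assoc]
  have hEnc0 : Enc (fun _ _ => false : Fin N → Fin l → Bool) = 0 := by
    simp [Enc, beta, eN]
  constructor
  · refine ⟨(fun _ _ => false), M, le_refl _, ?_, ?_⟩
    · apply Enc_injective
      rw [hiter M _, hEnc0, Nat.zero_add, Nat.mod_self]
    · intro k hk1 hk2 hcon
      have := hiter k (fun _ _ => false)
      rw [hcon, hEnc0, Nat.zero_add, Nat.mod_eq_of_lt hk2] at this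
      omega
  · intro k₁ k₂ h₁ h₂ heq
    have e₁ := hiter k₁ (fun _ _ => false)
    have e₂ := hiter k₂ (fun _ _ => false)
    rw [heq] at e₁
    rw [e₂] at e₁
    rw [hEnc0, Nat.zero_add, Nat.zero_add, Nat.mod_eq_of_lt h₁, Nat.mod_eq_of_lt h₂] at e₁
    omega
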